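/- Let A ∈ ℝ^{n×n} be exponentially stable, let C ∈ ℝ^{p×n}, let B_i, B_j ∈ ℝ^n, let D_i, D_j ∈ ℝ^p, and let t₀ ∈ ℕ. Let y_i, y_j : ℕ → ℝ^p be the state-space impulse-response signals with data (A, B_i, C, D_i) and (A, B_j, C, D_j) respectively, both with activation time t₀. Then ∑_{t=0}^∞ y_i(t) · y_j(t) = D_iᵀ D_j + B_iᵀ P₀ B_j, where P₀ = ∑_{t=0}^∞ (A^t)ᵀ Cᵀ C A^t is the observability Gramian and · denotes the Euclidean inner product in ℝ^p. -/

import Mathlib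

open Matrix

attribute [local instance] Matrix.normedAddCommGroup

/-- `A` is exponentially stable: `‖A^t‖ ≤ c·r^t` for some `c ≥ 0` and `r ∈ [0,1)`. -/
def ExpStable {n : ℕ} (A : Matrix (Fin n) (Fin n) ℝ) : Prop :=
  ∃ (c r : ℝ), 0 ≤ c ∧ 0 ≤ r ∧ r < 1 ∧ ∀ t : ℕ, ‖A ^ t‖ ≤ c * r ^ t

/-- State-space impulse-response signal with data `(A, B, C, D)` and activation time `t₀`:
`y t = 0` for `t < t₀`, `y t₀ = D`, and `y t = C A^(t-t₀-1) B` for `t > t₀`. -/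
noncomputable def ssImpulse {n p : ℕ} (A : Matrix (Fin n) (Fin n) ℝ) (B : Fin n → ℝ)
    (C : Matrix (Fin p) (Fin n) ℝ) (D : Fin p → ℝ) (t₀ : ℕ) :
    ℕ → EuclideanSpace ℝ (Fin p) :=
  fun t => if t < t₀ then 0 else if t = t₀ then WithLp.toLp 2 D else WithLp.toLp 2 (C *ᵥ ((A ^ (t - t₀ - 1)) *ᵥ B))

lemma inner_eq_dot' {p : ℕ} (x y : EuclideanSpace ℝ (Fin p)) :
    (inner ℝ x y : ℝ) = (x : Fin p → ℝ) ⬝ᵥ (y : Fin p → ℝ) := by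
  simp [PiLp.inner_apply, RCLike.inner_apply, dotProduct, mul_comm]

lemma dot_rewrite' {n p : ℕ} (C : Matrix (Fin p) (Fin n) ℝ) (X : Matrix (Fin n) (Fin n) ℝ)
    (u v : Fin n → ℝ) :
    (C *ᵥ (X *ᵥ u)) ⬝ᵥ (C *ᵥ (X *ᵥ v)) = u ⬝ᵥ ((Xᵀ * Cᵀ * C * X) *ᵥ v) := by
  rw [Matrix.dotProduct_mulVec, Matrix.dotProduct_mulVec, Matrix.dotProduct_mulVec u,
    ← Matrix.vecMul_vecMul, ← Matrix.vecMul_vecMul, ← Matrix.vecMul_vecMul,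
    Matrix.vecMul_transpose, Matrix.vecMul_transpose]

lemma entry_CA_le' {n p : ℕ} (C : Matrix (Fin p) (Fin n) ℝ) (X : Matrix (Fin n) (Fin n) ℝ)
    (b : ℝ) (hX : ‖X‖ ≤ b) (i : Fin p) (a : Fin n) :
    |(C * X) i a| ≤ n * ‖C‖ * b := by
  calc |(C * X) i a| = |∑ d, C i d * X d a| := by rw [Matrix.mul_apply]
    _ ≤ ∑ d, |C i d * X d a| := Finset.abs_sum_le_sum_abs _ _
    _ ≤ ∑ _d : Fin n, ‖C‖ * b := by
        apply Finset.sum_le_sum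
        intro d _
        rw [abs_mul]
        exact mul_le_mul (Matrix.norm_entry_le_entrywise_sup_norm C)
          ((Matrix.norm_entry_le_entrywise_sup_norm X).trans hX) (abs_nonneg _) (norm_nonneg _)
    _ = n * ‖C‖ * b := by simp [mul_assoc]

lemma norm_M_le' {n p : ℕ} (A : Matrix (Fin n) (Fin n) ℝ) (C : Matrix (Fin p) (Fin n) ℝ)
    (c r : ℝ) (hc : 0 ≤ c) (hr : 0 ≤ r) (hb : ∀ t, ‖A ^ t‖ ≤ c * r ^ t) (k : ℕ) :
    ‖(A ^ k)ᵀ * Cᵀ * C * A ^ k‖ ≤ (p * (n * ‖C‖ * c) ^ 2) * (r ^ 2) ^ k := by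
  have hM : (A ^ k)ᵀ * Cᵀ * C * A ^ k = (C * A ^ k)ᵀ * (C * A ^ k) := by
    rw [Matrix.transpose_mul, Matrix.mul_assoc]
  have hbd : (0:ℝ) ≤ c * r ^ k := mul_nonneg hc (pow_nonneg hr k)
  have hent : ∀ i a, |(C * A ^ k) i a| ≤ n * ‖C‖ * (c * r ^ k) :=
    entry_CA_le' C _ _ (hb k)
  have hnn : (0:ℝ) ≤ n * ‖C‖ * (c * r ^ k) :=
    mul_nonneg (mul_nonneg (Nat.cast_nonneg n) (norm_nonneg _)) hbd
  rw [hM, Matrix.norm_le_iff (by positivity)]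
  intro a b
  calc ‖((C * A ^ k)ᵀ * (C * A ^ k)) a b‖
      = |∑ i, (C * A ^ k) i a * (C * A ^ k) i b| := by
        rw [Matrix.mul_apply]; simp [Matrix.transpose_apply, Real.norm_eq_abs]
    _ ≤ ∑ i, |(C * A ^ k) i a * (C * A ^ k) i b| := Finset.abs_sum_le_sum_abs _ _
    _ ≤ ∑ _i : Fin p, (n * ‖C‖ * (c * r ^ k)) * (n * ‖C‖ * (c * r ^ k)) := by
        apply Finset.sum_le_sum
        intro i _
        rw [abs_mul]
        exact mul_le_mul (hent i a) (hent i b) (abs_nonneg _) hnn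
    _ = (p * (n * ‖C‖ * c) ^ 2) * (r ^ 2) ^ k := by
        simp [Finset.sum_const]
        ring

theorem cross_term_same_activation_time (n p : ℕ)
    (A : Matrix (Fin n) (Fin n) ℝ) (hA : ExpStable A)
    (C : Matrix (Fin p) (Fin n) ℝ)
    (Bi Bj : Fin n → ℝ) (Di Dj : Fin p → ℝ) (t₀ : ℕ)
    (P₀ : Matrix (Fin n) (Fin n) ℝ)
    (hP₀ : P₀ = ∑' t : ℕ, (A ^ t)ᵀ * Cᵀ * C * A ^ t) :
    (∑' t : ℕ, (inner ℝ (ssImpulse A Bi C Di t₀ t) (ssImpulse A Bj C Dj t₀ t) : ℝ)) =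
      Di ⬝ᵥ Dj + Bi ⬝ᵥ (P₀ *ᵥ Bj) := by
  obtain ⟨c, r, hc, hr, hr1, hb⟩ := hA
  set M : ℕ → Matrix (Fin n) (Fin n) ℝ := fun k => (A ^ k)ᵀ * Cᵀ * C * A ^ k with hMdef
  have hMsum : Summable M := by
    haveI : @CompleteSpace (Matrix (Fin n) (Fin n) ℝ) PseudoMetricSpace.toUniformSpace := (inferInstance : CompleteSpace (Fin n → Fin n → ℝ))
    apply Summable.of_norm_bounded
      ((summable_geometric_of_lt_one (r := r ^ 2) (by positivity) (by nlinarith)).mul_left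
        (p * (n * ‖C‖ * c) ^ 2))
    intro k
    exact norm_M_le' A C c r hc hr hb k
  -- the continuous linear functional X ↦ Bi ⬝ᵥ (X *ᵥ Bj)
  let L₀ : Matrix (Fin n) (Fin n) ℝ →ₗ[ℝ] ℝ :=
    { toFun := fun X => Bi ⬝ᵥ (X *ᵥ Bj)
      map_add' := fun X Y => by simp [Matrix.add_mulVec, dotProduct_add]
      map_smul' := fun a X => by simp [Matrix.smul_mulVec, dotProduct_smul] }
  let L : Matrix (Fin n) (Fin n) ℝ →L[ℝ] ℝ := LinearMap.toContinuousLinearMap L₀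
  have hL : ∀ X, L X = Bi ⬝ᵥ (X *ᵥ Bj) := fun X => rfl
  have hPsum : Bi ⬝ᵥ (P₀ *ᵥ Bj) = ∑' k, Bi ⬝ᵥ (M k *ᵥ Bj) := by
    rw [hP₀, ← hL]
    rw [show (∑' t : ℕ, (A ^ t)ᵀ * Cᵀ * C * A ^ t) = ∑' k, M k from rfl]
    rw [L.map_tsum hMsum]
    exact tsum_congr fun k => hL (M k)
  -- the summand function
  set f : ℕ → ℝ := fun t => (inner ℝ (ssImpulse A Bi C Di t₀ t) (ssImpulse A Bj C Dj t₀ t) : ℝ)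
    with hfdef
  have hf_lt : ∀ t, t < t₀ → f t = 0 := by
    intro t ht
    simp [hfdef, ssImpulse, ht]
  have hf_eq : f t₀ = Di ⬝ᵥ Dj := by
    simp [hfdef, ssImpulse, inner_eq_dot', dotProduct]
  have hf_gt : ∀ s : ℕ, f (s + 1 + t₀) = Bi ⬝ᵥ (M s *ᵥ Bj) := by
    intro s
    have h1 : ¬ (s + 1 + t₀ < t₀) := by omega
    have h2 : s + 1 + t₀ ≠ t₀ := by omega
    have h3 : s + 1 + t₀ - t₀ - 1 = s := by omega
    simp only [hfdef, ssImpulse, h1, h2, h3, if_false, if_neg h2]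
    rw [inner_eq_dot']
    exact dot_rewrite' C (A ^ s) Bi Bj
  have hg_sum : Summable (fun k => Bi ⬝ᵥ (M k *ᵥ Bj)) := by
    have := hMsum.map (L : Matrix (Fin n) (Fin n) ℝ →+ ℝ) L.continuous
    simpa [Function.comp_def, hL] using this
  have hshift : Summable (fun s => f (s + 1 + t₀)) := by
    apply hg_sum.congr
    intro s
    exact (hf_gt s).symm
  have hh_sum : Summable (fun s => f (s + t₀)) := (summable_nat_add_iff 1).mp hshift
  have hf_sum : Summable f := (summable_nat_add_iff t₀).mp hh_sum
  have key : (∑' t, f t) = ∑ t ∈ Finset.range t₀, f t + ∑' s, f (s + t₀) :=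
    (Summable.sum_add_tsum_nat_add t₀ hf_sum).symm
  have hzero : ∑ t ∈ Finset.range t₀, f t = 0 := by
    apply Finset.sum_eq_zero
    intro t ht
    exact hf_lt t (Finset.mem_range.mp ht)
  have hsplit : (∑' s, f (s + t₀)) = f t₀ + ∑' s, f (s + 1 + t₀) := by
    rw [Summable.tsum_eq_zero_add hh_sum]
    simp
  calc (∑' t, f t) = 0 + (f t₀ + ∑' s, f (s + 1 + t₀)) := by rw [key, hzero, hsplit]
    _ = Di ⬝ᵥ Dj + Bi ⬝ᵥ (P₀ *ᵥ Bj) := by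
        rw [zero_add, hf_eq, hPsum]
        congr 1
        exact tsum_congr hf_gt
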